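/- Let k > 0, γ > 0, ξ ∈ ℝ and (x₁, x₂) ∈ ℝ². Then the function G(R) = ∫₀^π ((iγ sin θ + ξ|cos θ|)/k − 1)·exp(−ik(x₁ cos θ + x₂ sin θ))·exp(−R(γ sin θ − iξ|cos θ|)) dθ satisfies G(R) = O(R^{−1}) as R → ∞. -/

import Mathlib

open scoped Real

lemma half_int (c : ℝ) (hc : 0 < c) :
    ∫ θ in (0:ℝ)..(π/2), Real.exp (-(c * Real.sin θ)) ≤ π / (2*c) := by
  have hπ := Real.pi_pos
  have h1 : ∫ θ in (0:ℝ)..(π/2), Real.exp (-(c * Real.sin θ)) ≤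
      ∫ θ in (0:ℝ)..(π/2), Real.exp (-(2*c/π) * θ) := by
    apply intervalIntegral.integral_mono_on (by positivity)
    · apply Continuous.intervalIntegrable; fun_prop
    · apply Continuous.intervalIntegrable; fun_prop
    · intro x hx
      apply Real.exp_le_exp.2
      have := Real.mul_le_sin hx.1 hx.2
      rw [neg_mul, neg_le_neg_iff]
      calc 2*c/π * x = c * (2/π * x) := by ring
        _ ≤ c * Real.sin x := by nlinarith
  have h2 : ∫ θ in (0:ℝ)..(π/2), Real.exp (-(2*c/π) * θ) =
      (-(2*c/π))⁻¹ * (Real.exp (-(2*c/π) * (π/2)) - 1) := by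
    rw [intervalIntegral.integral_comp_mul_left (fun x => Real.exp x)
      (neg_ne_zero.2 (by positivity) : -(2*c/π) ≠ 0)]
    simp [integral_exp]
  rw [h2] at h1
  have he : 0 < Real.exp (-(2*c/π) * (π/2)) := Real.exp_pos _
  have : (-(2*c/π))⁻¹ * (Real.exp (-(2*c/π) * (π/2)) - 1) ≤ π/(2*c) := by
    rw [← neg_inv, neg_mul, neg_le]
    have h3 : (0:ℝ) < 2*c/π := by positivity
    have h4 : (2*c/π)⁻¹ = π/(2*c) := by
      field_simp
    nlinarith [he, (by positivity : (0:ℝ) < π/(2*c))]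
  linarith

lemma full_int (c : ℝ) (hc : 0 < c) :
    ∫ θ in (0:ℝ)..π, Real.exp (-(c * Real.sin θ)) ≤ π / c := by
  have hπ := Real.pi_pos
  have hsplit : ∫ θ in (0:ℝ)..π, Real.exp (-(c * Real.sin θ)) =
      (∫ θ in (0:ℝ)..(π/2), Real.exp (-(c * Real.sin θ))) +
      ∫ θ in (π/2)..π, Real.exp (-(c * Real.sin θ)) := by
    rw [intervalIntegral.integral_add_adjacent_intervals] <;>
      · apply Continuous.intervalIntegrable; fun_prop
  have hsym : ∫ θ in (π/2)..π, Real.exp (-(c * Real.sin θ)) =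
      ∫ θ in (0:ℝ)..(π/2), Real.exp (-(c * Real.sin θ)) := by
    have : ∀ θ : ℝ, Real.exp (-(c * Real.sin θ)) =
        (fun u => Real.exp (-(c * Real.sin u))) (π - θ) := by
      intro θ; simp [Real.sin_pi_sub]
    rw [intervalIntegral.integral_congr (fun θ _ => this θ),
      intervalIntegral.integral_comp_sub_left (fun u => Real.exp (-(c * Real.sin u))) π]
    rw [sub_self, show π - π/2 = π/2 by ring]
  have hh := half_int c hc
  rw [hsplit, hsym]
  have : π / (2*c) + π / (2*c) = π / c := by field_simp; ring
  linarith

lemma pointwise_bound (k γ ξ x₁ x₂ R θ : ℝ) (hk : 0 < k) (hγ : 0 < γ) :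
    ‖((Complex.I * (γ : ℂ) * ((Real.sin θ : ℝ) : ℂ) +
            ((ξ * |Real.cos θ| : ℝ) : ℂ)) / (k : ℂ) - 1) *
          Complex.exp (-Complex.I * (k : ℂ) *
            ((x₁ * Real.cos θ + x₂ * Real.sin θ : ℝ) : ℂ)) *
          Complex.exp (-(R : ℂ) * (((γ * Real.sin θ : ℝ) : ℂ) -
            Complex.I * ((ξ * |Real.cos θ| : ℝ) : ℂ)))‖
      ≤ ((γ + |ξ|)/k + 1) * Real.exp (-(R * γ * Real.sin θ)) := by
  rw [norm_mul, norm_mul]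
  have h2 : ‖Complex.exp (-Complex.I * (k : ℂ) *
      ((x₁ * Real.cos θ + x₂ * Real.sin θ : ℝ) : ℂ))‖ = 1 := by
    rw [Complex.norm_exp]
    simp [Complex.mul_re]
  have h3 : ‖Complex.exp (-(R : ℂ) * (((γ * Real.sin θ : ℝ) : ℂ) -
      Complex.I * ((ξ * |Real.cos θ| : ℝ) : ℂ)))‖ = Real.exp (-(R * γ * Real.sin θ)) := by
    rw [Complex.norm_exp]
    congr 1
    simp [Complex.mul_re, Complex.sin_ofReal_re]
    ring
  have h1 : ‖(Complex.I * (γ : ℂ) * ((Real.sin θ : ℝ) : ℂ) +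
      ((ξ * |Real.cos θ| : ℝ) : ℂ)) / (k : ℂ) - 1‖ ≤ (γ + |ξ|)/k + 1 := by
    refine (norm_sub_le _ _).trans ?_
    rw [norm_div, norm_one, Complex.norm_real, Real.norm_eq_abs, abs_of_pos hk]
    gcongr
    refine (norm_add_le _ _).trans ?_
    simp only [norm_mul, Complex.norm_I, one_mul, Complex.norm_real, Real.norm_eq_abs]
    rw [abs_of_pos hγ]
    have hs := Real.abs_sin_le_one θ
    have hc := Real.abs_cos_le_one θ
    nlinarith [abs_mul ξ (|Real.cos θ|), abs_abs (Real.cos θ), abs_nonneg ξ,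
      abs_nonneg (Real.cos θ), abs_nonneg (Real.sin θ)]
  rw [h2, h3, mul_one]
  exact mul_le_mul_of_nonneg_right h1 (Real.exp_pos _).le

/-- Guided-mode contribution over the upper semicircle:
`G(R) = ∫₀^π ((iγ sin θ + ξ|cos θ|)/k - 1) e^{-ik(x₁ cos θ + x₂ sin θ)}
e^{-R(γ sin θ - iξ|cos θ|)} dθ` is `O(R⁻¹)` as `R → ∞`. -/
theorem stmt9 (k γ ξ x₁ x₂ : ℝ) (hk : 0 < k) (hγ : 0 < γ) :
    (fun R : ℝ => ∫ θ in (0 : ℝ)..π,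
        ((Complex.I * (γ : ℂ) * ((Real.sin θ : ℝ) : ℂ) +
            ((ξ * |Real.cos θ| : ℝ) : ℂ)) / (k : ℂ) - 1) *
          Complex.exp (-Complex.I * (k : ℂ) *
            ((x₁ * Real.cos θ + x₂ * Real.sin θ : ℝ) : ℂ)) *
          Complex.exp (-(R : ℂ) * (((γ * Real.sin θ : ℝ) : ℂ) -
            Complex.I * ((ξ * |Real.cos θ| : ℝ) : ℂ))))
      =O[Filter.atTop] fun R : ℝ => R⁻¹ := by
  have hπ := Real.pi_pos
  set C0 : ℝ := (γ + |ξ|)/k + 1 with hC0def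
  have hC0 : 0 ≤ C0 := by positivity
  rw [Asymptotics.isBigO_iff]
  refine ⟨C0 * (π/γ), ?_⟩
  filter_upwards [Filter.eventually_gt_atTop 0] with R hR0
  have hRγ : 0 < R * γ := by positivity
  calc ‖∫ θ in (0 : ℝ)..π,
        ((Complex.I * (γ : ℂ) * ((Real.sin θ : ℝ) : ℂ) +
            ((ξ * |Real.cos θ| : ℝ) : ℂ)) / (k : ℂ) - 1) *
          Complex.exp (-Complex.I * (k : ℂ) *
            ((x₁ * Real.cos θ + x₂ * Real.sin θ : ℝ) : ℂ)) *
          Complex.exp (-(R : ℂ) * (((γ * Real.sin θ : ℝ) : ℂ) -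
            Complex.I * ((ξ * |Real.cos θ| : ℝ) : ℂ)))‖
      ≤ ∫ θ in (0 : ℝ)..π,
        ‖((Complex.I * (γ : ℂ) * ((Real.sin θ : ℝ) : ℂ) +
            ((ξ * |Real.cos θ| : ℝ) : ℂ)) / (k : ℂ) - 1) *
          Complex.exp (-Complex.I * (k : ℂ) *
            ((x₁ * Real.cos θ + x₂ * Real.sin θ : ℝ) : ℂ)) *
          Complex.exp (-(R : ℂ) * (((γ * Real.sin θ : ℝ) : ℂ) -
            Complex.I * ((ξ * |Real.cos θ| : ℝ) : ℂ)))‖ :=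
        intervalIntegral.norm_integral_le_integral_norm hπ.le
    _ ≤ ∫ θ in (0 : ℝ)..π, C0 * Real.exp (-(R * γ * Real.sin θ)) := by
        apply intervalIntegral.integral_mono_on hπ.le ?_ ?_
          (fun θ _ => pointwise_bound k γ ξ x₁ x₂ R θ hk hγ)
        · apply Continuous.intervalIntegrable
          apply Continuous.norm
          fun_prop
        · apply Continuous.intervalIntegrable; fun_prop
    _ = C0 * ∫ θ in (0 : ℝ)..π, Real.exp (-(R * γ * Real.sin θ)) := by
        rw [intervalIntegral.integral_const_mul]
    _ ≤ C0 * (π / (R * γ)) := by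
        apply mul_le_mul_of_nonneg_left ?_ hC0
        have := full_int (R * γ) hRγ
        simpa [mul_assoc] using this
    _ ≤ C0 * (π/γ) * ‖R⁻¹‖ := by
        rw [Real.norm_eq_abs, abs_of_pos (inv_pos.2 hR0)]
        apply le_of_eq
        field_simp
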